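/- arXiv:2206.13400 — 4 statements merged into one kernel-verified Lean document; each statement's English description precedes it below -/
import Mathlib

section
/- Let N = (N₀, N₁) be a pair of measurable functions from a Banach space X to [0,∞], let E be a Banach function space over (0,∞), and define K(x,t) = inf{N₀(x−v) + t N₁(v) : v ∈ X}, N_E(x) = ‖t ↦ K(x,t)/t‖_E, and the mean-method quantity N_E^{L⁰}(x) = inf over measurable u : (0,∞) → X of ‖t ↦ N₀(x − u(t))/t‖_E + ‖t ↦ N₁(u(t))‖_E. Then N_E(x) ≤ N_E^{L⁰}(x) ≤ 2 N_E(x) for every x ∈ X. -/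
open Set MeasureTheory Real
open scoped ENNReal NNReal

/-- The `K`-function of the interpolation couple `(N₀, N₁)`. -/
noncomputable def Kfun {X : Type*} [AddGroup X] (N₀ N₁ : X → ℝ≥0∞) (x : X) (t : ℝ) : ℝ≥0∞ :=
  ⨅ v : X, N₀ (x - v) + ENNReal.ofReal t * N₁ v

/-- The interpolation function of the `K`-method: `N_E(x) = ‖t ↦ K(x,t)/t‖_E`. -/
noncomputable def kMethod {X : Type*} [AddGroup X] (E : (ℝ → ℝ≥0∞) → ℝ≥0∞)
    (N₀ N₁ : X → ℝ≥0∞) (x : X) : ℝ≥0∞ :=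
  E (fun t => if 0 < t then Kfun N₀ N₁ x t / ENNReal.ofReal t else 0)

/-- The interpolation function of the mean method over measurable competitors:
`N_E^{L⁰}(x) = inf over measurable u of ‖t ↦ N₀(x-u(t))/t‖_E + ‖t ↦ N₁(u(t))‖_E`. -/
noncomputable def meanMethodL0 {X : Type*} [AddGroup X] [MeasurableSpace X]
    (E : (ℝ → ℝ≥0∞) → ℝ≥0∞) (N₀ N₁ : X → ℝ≥0∞) (x : X) : ℝ≥0∞ :=
  ⨅ (u : ℝ → X) (_ : Measurable u),
    E (fun t => if 0 < t then N₀ (x - u t) / ENNReal.ofReal t else 0)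
      + E (fun t => if 0 < t then N₁ (u t) else 0)

/-- equivalence of the `K`-method and the mean method:
`N_E(x) ≤ N_E^{L⁰}(x) ≤ 2·N_E(x)` for every `x ∈ X`. -/
theorem stmt3 {X : Type*} [NormedAddCommGroup X] [MeasurableSpace X] [BorelSpace X]
    (N₀ N₁ : X → ℝ≥0∞) (hN₀ : Measurable N₀) (hN₁ : Measurable N₁)
    (E : (ℝ → ℝ≥0∞) → ℝ≥0∞)
    (hE_mono : ∀ f g : ℝ → ℝ≥0∞, (∀ t, f t ≤ g t) → E f ≤ E g)
    (hE_add : ∀ f g : ℝ → ℝ≥0∞, E (fun t => f t + g t) ≤ E f + E g)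
    (hE_smul : ∀ (c : ℝ≥0∞) (f : ℝ → ℝ≥0∞), E (fun t => c * f t) = c * E f)
    -- `L¹ ∩ L∞ (0,∞) ⊆ E`, used through the function `t ↦ min{1, 1/t²}`
    (hE_fin : E (fun t => ENNReal.ofReal (min 1 (1 / t ^ 2))) ≠ ⊤)
    (x : X) :
    kMethod E N₀ N₁ x ≤ meanMethodL0 E N₀ N₁ x ∧
    meanMethodL0 E N₀ N₁ x ≤ 2 * kMethod E N₀ N₁ x := by
  have hKmono : ∀ s t : ℝ, s ≤ t → Kfun N₀ N₁ x s ≤ Kfun N₀ N₁ x t := by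
    intro s t hst
    exact iInf_mono fun w =>
      add_le_add_right (mul_le_mul_left (ENNReal.ofReal_le_ofReal hst) _) _
  constructor
  · -- easy direction
    refine le_iInf fun u => le_iInf fun hu => ?_
    refine le_trans (hE_mono _ _ ?_) (hE_add _ _)
    intro t
    by_cases ht : 0 < t
    · simp only [if_pos ht]
      have htne : ENNReal.ofReal t ≠ 0 := by
        simp only [ne_eq, ENNReal.ofReal_eq_zero, not_le]; exact ht
      have h1 : Kfun N₀ N₁ x t ≤ N₀ (x - u t) + ENNReal.ofReal t * N₁ (u t) :=
        iInf_le _ (u t)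
      calc Kfun N₀ N₁ x t / ENNReal.ofReal t
          ≤ (N₀ (x - u t) + ENNReal.ofReal t * N₁ (u t)) / ENNReal.ofReal t :=
            ENNReal.div_le_div_right h1 _
        _ = N₀ (x - u t) / ENNReal.ofReal t
            + ENNReal.ofReal t * N₁ (u t) / ENNReal.ofReal t := ENNReal.add_div
        _ = N₀ (x - u t) / ENNReal.ofReal t + N₁ (u t) := by
            rw [mul_comm, mul_div_assoc, ENNReal.div_self htne ENNReal.ofReal_ne_top, mul_one]
    · simp [ht]
  · -- hard direction
    by_cases hKtop : kMethod E N₀ N₁ x = ⊤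
    · rw [hKtop, ENNReal.mul_top (by norm_num)]
      exact le_top
    have hC : E (fun t => ENNReal.ofReal (min 1 (1 / t ^ 2))) ≠ ⊤ := hE_fin
    have step : ∀ ε : ℝ, 0 < ε →
        meanMethodL0 E N₀ N₁ x
          ≤ ENNReal.ofReal (1 + ε) * (kMethod E N₀ N₁ x
              + ENNReal.ofReal ε * E (fun t => ENNReal.ofReal (min 1 (1 / t ^ 2))))
            + ENNReal.ofReal (1 + ε) * (kMethod E N₀ N₁ x
              + ENNReal.ofReal ε * E (fun t => ENNReal.ofReal (min 1 (1 / t ^ 2)))) := by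
      intro ε hε
      set b : ℝ := 1 + ε with hbdef
      have hb1 : 1 < b := by rw [hbdef]; linarith
      have hb0 : 0 < b := by linarith
      have hbne : b ≠ 1 := hb1.ne'
      -- choose near-minimizers at the dyadic-like points b^k
      have hchoice : ∀ k : ℤ, ∃ w : X,
          N₀ (x - w) + ENNReal.ofReal (b ^ k) * N₁ w
            ≤ Kfun N₀ N₁ x (b ^ k)
              + ENNReal.ofReal (ε * b ^ k * min 1 (1 / (b ^ (k + 1)) ^ 2)) := by
        intro k
        by_cases hfin : Kfun N₀ N₁ x (b ^ k) = ⊤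
        · exact ⟨0, by simp [hfin]⟩
        · have hbk1 : (0:ℝ) < b ^ (k + 1) := zpow_pos hb0 _
          have hbk : (0:ℝ) < b ^ k := zpow_pos hb0 _
          have hmin : (0:ℝ) < min 1 (1 / (b ^ (k + 1)) ^ 2) :=
            lt_min one_pos (by positivity)
          have hδpos : (0:ℝ) < ε * b ^ k * min 1 (1 / (b ^ (k + 1)) ^ 2) :=
            mul_pos (mul_pos hε hbk) hmin
          have hlt : (⨅ w : X, N₀ (x - w) + ENNReal.ofReal (b ^ k) * N₁ w)
              < Kfun N₀ N₁ x (b ^ k)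
                + ENNReal.ofReal (ε * b ^ k * min 1 (1 / (b ^ (k + 1)) ^ 2)) :=
            ENNReal.lt_add_right hfin (ENNReal.ofReal_pos.2 hδpos).ne'
          obtain ⟨w, hw⟩ := iInf_lt_iff.mp hlt
          exact ⟨w, hw.le⟩
      choose v hv using hchoice
      set u : ℝ → X := fun t => if 0 < t then v ⌊Real.logb b t⌋ else 0 with hudef
      have humeas : Measurable u := by
        refine Measurable.ite measurableSet_Ioi ?_ measurable_const
        have h1 : Measurable fun t : ℝ => Real.logb b t := by
          simpa [Real.logb] using Real.measurable_log.div_const (Real.log b)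
        exact measurable_from_top.comp (Int.measurable_floor.comp h1)
      have hbound : ∀ t : ℝ, 0 < t →
          N₀ (x - u t) + ENNReal.ofReal t * N₁ (u t)
            ≤ ENNReal.ofReal b
              * (Kfun N₀ N₁ x t + ENNReal.ofReal (ε * t * min 1 (1 / t ^ 2))) := by
        intro t ht
        set k : ℤ := ⌊Real.logb b t⌋ with hk
        have hut : u t = v k := by simp [hudef, ht, hk]
        have htk : b ^ k ≤ t := by
          have h1 : b ^ ((k : ℝ)) ≤ b ^ Real.logb b t :=
            (Real.rpow_le_rpow_left_iff hb1).2 (Int.floor_le _)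
          rwa [Real.rpow_intCast, Real.rpow_logb hb0 hbne ht] at h1
        have htk' : t < b ^ (k + 1) := by
          have h1 : b ^ Real.logb b t < b ^ (((k : ℝ) + 1)) :=
            (Real.rpow_lt_rpow_left_iff hb1).2 (Int.lt_floor_add_one _)
          rwa [Real.rpow_logb hb0 hbne ht,
            show ((k : ℝ) + 1) = (((k + 1 : ℤ)) : ℝ) by push_cast; ring,
            Real.rpow_intCast] at h1
        have hbk : b ^ (k + 1) = b * b ^ k := by
          rw [zpow_add_one₀ (ne_of_gt hb0)]; ring
        have hbkpos : (0:ℝ) < b ^ k := zpow_pos hb0 _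
        have hbk1pos : (0:ℝ) < b ^ (k + 1) := zpow_pos hb0 _
        rw [hut]
        calc N₀ (x - v k) + ENNReal.ofReal t * N₁ (v k)
            ≤ ENNReal.ofReal b * N₀ (x - v k)
              + ENNReal.ofReal (b * b ^ k) * N₁ (v k) := by
              refine add_le_add ?_ (mul_le_mul_left (ENNReal.ofReal_le_ofReal ?_) _)
              · refine le_mul_of_one_le_left zero_le ?_
                rw [show (1 : ℝ≥0∞) = ENNReal.ofReal 1 by simp]
                exact ENNReal.ofReal_le_ofReal hb1.le
              · rw [← hbk]; exact htk'.le
          _ = ENNReal.ofReal b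
              * (N₀ (x - v k) + ENNReal.ofReal (b ^ k) * N₁ (v k)) := by
              rw [mul_add, ← mul_assoc, ← ENNReal.ofReal_mul hb0.le]
          _ ≤ ENNReal.ofReal b
              * (Kfun N₀ N₁ x (b ^ k)
                + ENNReal.ofReal (ε * b ^ k * min 1 (1 / (b ^ (k + 1)) ^ 2))) :=
              mul_le_mul_right (hv k) _
          _ ≤ ENNReal.ofReal b
              * (Kfun N₀ N₁ x t + ENNReal.ofReal (ε * t * min 1 (1 / t ^ 2))) := by
              refine mul_le_mul_right
                (add_le_add (hKmono _ _ htk) (ENNReal.ofReal_le_ofReal ?_)) _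
              have h2 : min 1 (1 / (b ^ (k + 1)) ^ 2) ≤ min 1 (1 / t ^ 2) := by
                refine min_le_min le_rfl ?_
                apply one_div_le_one_div_of_le (by positivity)
                nlinarith
              have h4 : (0:ℝ) ≤ min 1 (1 / t ^ 2) := le_min zero_le_one (by positivity)
              have h5 : (0:ℝ) ≤ min 1 (1 / (b ^ (k + 1)) ^ 2) :=
                le_min zero_le_one (by positivity)
              have h6 : b ^ k * min 1 (1 / (b ^ (k + 1)) ^ 2) ≤ t * min 1 (1 / t ^ 2) :=
                mul_le_mul htk h2 h5 ht.le
              calc ε * b ^ k * min 1 (1 / (b ^ (k + 1)) ^ 2)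
                  = ε * (b ^ k * min 1 (1 / (b ^ (k + 1)) ^ 2)) := by ring
                _ ≤ ε * (t * min 1 (1 / t ^ 2)) := mul_le_mul_of_nonneg_left h6 hε.le
                _ = ε * t * min 1 (1 / t ^ 2) := by ring
      -- divide the key bound by t
      have hdiv : ∀ t : ℝ, 0 < t →
          ENNReal.ofReal b
              * (Kfun N₀ N₁ x t + ENNReal.ofReal (ε * t * min 1 (1 / t ^ 2)))
              / ENNReal.ofReal t
            ≤ ENNReal.ofReal b
              * ((if 0 < t then Kfun N₀ N₁ x t / ENNReal.ofReal t else 0)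
                + ENNReal.ofReal ε * ENNReal.ofReal (min 1 (1 / t ^ 2))) := by
        intro t ht
        rw [mul_div_assoc, ENNReal.add_div]
        refine mul_le_mul_right (add_le_add (by rw [if_pos ht]) ?_) _
        rw [← ENNReal.ofReal_div_of_pos ht,
          show ε * t * min 1 (1 / t ^ 2) / t = ε * min 1 (1 / t ^ 2) by
            field_simp]
        rw [ENNReal.ofReal_mul hε.le]
      have hf₀ : ∀ t : ℝ,
          (if 0 < t then N₀ (x - u t) / ENNReal.ofReal t else 0)
            ≤ ENNReal.ofReal b
              * ((if 0 < t then Kfun N₀ N₁ x t / ENNReal.ofReal t else 0)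
                + ENNReal.ofReal ε * ENNReal.ofReal (min 1 (1 / t ^ 2))) := by
        intro t
        by_cases ht : 0 < t
        · rw [if_pos ht]
          exact le_trans
            (ENNReal.div_le_div_right (le_self_add.trans (hbound t ht)) _) (hdiv t ht)
        · simp [ht]
      have hf₁ : ∀ t : ℝ,
          (if 0 < t then N₁ (u t) else 0)
            ≤ ENNReal.ofReal b
              * ((if 0 < t then Kfun N₀ N₁ x t / ENNReal.ofReal t else 0)
                + ENNReal.ofReal ε * ENNReal.ofReal (min 1 (1 / t ^ 2))) := by
        intro t
        by_cases ht : 0 < t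
        · rw [if_pos ht]
          have htne : ENNReal.ofReal t ≠ 0 := by
            simp only [ne_eq, ENNReal.ofReal_eq_zero, not_le]; exact ht
          have h1 : N₁ (u t) = ENNReal.ofReal t * N₁ (u t) / ENNReal.ofReal t := by
            rw [mul_comm, mul_div_assoc, ENNReal.div_self htne ENNReal.ofReal_ne_top, mul_one]
          rw [h1]
          exact le_trans
            (ENNReal.div_le_div_right (le_add_self.trans (hbound t ht)) _) (hdiv t ht)
        · simp [ht]
      have hEh : E (fun t => ENNReal.ofReal b
            * ((if 0 < t then Kfun N₀ N₁ x t / ENNReal.ofReal t else 0)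
              + ENNReal.ofReal ε * ENNReal.ofReal (min 1 (1 / t ^ 2))))
          ≤ ENNReal.ofReal b * (kMethod E N₀ N₁ x
              + ENNReal.ofReal ε * E (fun t => ENNReal.ofReal (min 1 (1 / t ^ 2)))) := by
        rw [hE_smul]
        refine mul_le_mul_right ((hE_add _ _).trans (add_le_add ?_ ?_)) _
        · exact le_of_eq rfl
        · exact le_of_eq (hE_smul _ _)
      calc meanMethodL0 E N₀ N₁ x
          ≤ E (fun t => if 0 < t then N₀ (x - u t) / ENNReal.ofReal t else 0)
            + E (fun t => if 0 < t then N₁ (u t) else 0) := iInf₂_le u humeas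
        _ ≤ _ := add_le_add ((hE_mono _ _ hf₀).trans hEh) ((hE_mono _ _ hf₁).trans hEh)
    -- pass to the limit ε → 0
    have key : ∀ ε : ℝ, 0 < ε → ε ≤ 1 →
        meanMethodL0 E N₀ N₁ x
          ≤ 2 * kMethod E N₀ N₁ x
            + ENNReal.ofReal ε * (2 * kMethod E N₀ N₁ x
              + 4 * E (fun t => ENNReal.ofReal (min 1 (1 / t ^ 2)))) := by
      intro ε hε hε1
      refine (step ε hε).trans ?_
      have he1 : ENNReal.ofReal ε ≤ 1 := ENNReal.ofReal_le_one.2 hε1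
      rw [ENNReal.ofReal_add zero_le_one hε.le, ENNReal.ofReal_one]
      set e := ENNReal.ofReal ε
      set K := kMethod E N₀ N₁ x
      set C := E (fun t => ENNReal.ofReal (min 1 (1 / t ^ 2)))
      calc (1 + e) * (K + e * C) + (1 + e) * (K + e * C)
          = 2 * K + 2 * e * K + 2 * e * C + 2 * (e * e) * C := by ring
        _ ≤ 2 * K + 2 * e * K + 2 * e * C + 2 * e * C := by
            gcongr
            exact mul_le_of_le_one_left zero_le he1
        _ = 2 * K + e * (2 * K + 4 * C) := by ring
    refine ENNReal.le_of_forall_pos_le_add fun η hη hfin2 => ?_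
    set M : ℝ≥0∞ := 2 * kMethod E N₀ N₁ x
        + 4 * E (fun t => ENNReal.ofReal (min 1 (1 / t ^ 2))) with hMdef
    have hMne : M ≠ ⊤ := by
      rw [hMdef]
      exact ENNReal.add_ne_top.2
        ⟨ENNReal.mul_ne_top (by norm_num) hKtop, ENNReal.mul_ne_top (by norm_num) hC⟩
    have hMr : 0 ≤ M.toReal := ENNReal.toReal_nonneg
    set ε : ℝ := min 1 ((η : ℝ) / (M.toReal + 1)) with hεdef
    have hη' : (0:ℝ) < (η : ℝ) := by exact_mod_cast hη
    have hε0 : 0 < ε := lt_min one_pos (div_pos hη' (by linarith))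
    refine (key ε hε0 (min_le_left _ _)).trans (add_le_add_right ?_ _)
    calc ENNReal.ofReal ε * M
        = ENNReal.ofReal ε * ENNReal.ofReal M.toReal := by
          rw [ENNReal.ofReal_toReal hMne]
      _ ≤ ENNReal.ofReal ((η : ℝ) / (M.toReal + 1)) * ENNReal.ofReal M.toReal :=
          mul_le_mul_left (ENNReal.ofReal_le_ofReal (min_le_right _ _)) _
      _ = ENNReal.ofReal ((η : ℝ) / (M.toReal + 1) * M.toReal) :=
          (ENNReal.ofReal_mul (by positivity)).symm
      _ ≤ ENNReal.ofReal (η : ℝ) := by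
          refine ENNReal.ofReal_le_ofReal ?_
          rw [div_mul_eq_mul_div, div_le_iff₀ (by linarith)]
          nlinarith
      _ = (η : ℝ≥0∞) := ENNReal.ofReal_coe_nnreal
end

section
/- Let A ⊆ X×X be m-accretive of type ω ≥ 0 on a Banach space X, with resolvent J_t = (I + tA)^{-1} for tω < 1, and let K(x,t) = inf{‖x−v‖_X + t|Av| : v ∈ dom A}, where |Av| = inf{‖f‖ : (v,f) ∈ A}. Then for every x ∈ X and t > 0 with tω < 1: (1/2)·K(x,t)/t ≤ ‖x − J_t x‖_X / t ≤ ((2−tω)/(1−tω))·K(x,t)/t. -/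
open Set Real
open scoped ENNReal NNReal

/-- The set norm `|B| = inf{‖f‖ : f ∈ B}` (with `inf ∅ = ∞`) of the image set `Av`
of an operator (relation) `A ⊆ X × X` at `v`. -/
noncomputable def setNormRel {X : Type*} [NormedAddCommGroup X]
    (A : Set (X × X)) (v : X) : ℝ≥0∞ :=
  ⨅ (f : X) (_ : (v, f) ∈ A), (‖f‖₊ : ℝ≥0∞)

/-- `K(x,t) = inf{‖x-v‖ + t|Av| : v}` (the infimum is effectively over `v ∈ dom A`). -/
noncomputable def Krel {X : Type*} [NormedAddCommGroup X]
    (A : Set (X × X)) (x : X) (t : ℝ) : ℝ≥0∞ :=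
  ⨅ v : X, (‖x - v‖₊ : ℝ≥0∞) + ENNReal.ofReal t * setNormRel A v

/-- Accretivity of type `ω`. -/
def AccretiveOfType {X : Type*} [NormedAddCommGroup X] [NormedSpace ℝ X]
    (A : Set (X × X)) (ω : ℝ) : Prop :=
  ∀ p ∈ A, ∀ q ∈ A, ∀ lam : ℝ, 0 < lam → lam * ω < 1 →
    (1 - lam * ω) * ‖p.1 - q.1‖ ≤ ‖p.1 - q.1 + lam • (p.2 - q.2)‖

theorem ofReal_norm_eq_coe_nnnorm {E : Type*} [SeminormedAddCommGroup E] (a : E) :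
    ENNReal.ofReal ‖a‖ = (‖a‖₊ : ℝ≥0∞) :=
  ENNReal.ofReal_eq_coe_nnreal _

/-- Let `A ⊆ X×X` be m-accretive of type `ω ≥ 0` with resolvent
`J_t = (I + tA)⁻¹` (encoded by `(J t x, t⁻¹•(x - J t x)) ∈ A` for all `x`, which expresses
both surjectivity of `I + tA` and the defining relation of the resolvent). Then for every
`x ∈ X` and `t > 0` with `tω < 1`:
`(1/2)·K(x,t)/t ≤ ‖x - J_t x‖/t ≤ ((2-tω)/(1-tω))·K(x,t)/t`. -/
theorem stmt6 {X : Type*} [NormedAddCommGroup X] [NormedSpace ℝ X]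
    (A : Set (X × X)) (ω : ℝ) (hω : 0 ≤ ω) (hacc : AccretiveOfType A ω)
    (J : ℝ → X → X)
    (hJ : ∀ lam : ℝ, 0 < lam → lam * ω < 1 → ∀ x : X,
      (J lam x, lam⁻¹ • (x - J lam x)) ∈ A)
    (x : X) (t : ℝ) (ht : 0 < t) (htω : t * ω < 1) :
    (1 / 2 : ℝ≥0∞) * (Krel A x t / ENNReal.ofReal t)
        ≤ (‖x - J t x‖₊ : ℝ≥0∞) / ENNReal.ofReal t ∧
    (‖x - J t x‖₊ : ℝ≥0∞) / ENNReal.ofReal t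
        ≤ ENNReal.ofReal ((2 - t * ω) / (1 - t * ω)) * (Krel A x t / ENNReal.ofReal t) := by
  have ht0 : t ≠ 0 := ne_of_gt ht
  have h1tω : (0:ℝ) < 1 - t * ω := by linarith
  have hc0 : ENNReal.ofReal t ≠ 0 := by simp [ENNReal.ofReal_eq_zero]; linarith
  have hcT : ENNReal.ofReal t ≠ ∞ := ENNReal.ofReal_ne_top
  set c := ENNReal.ofReal t with hc
  -- Lower bound: Krel ≤ 2 * ‖x - J t x‖₊
  have hlow : Krel A x t ≤ 2 * (‖x - J t x‖₊ : ℝ≥0∞) := by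
    have h1 : Krel A x t ≤ (‖x - J t x‖₊ : ℝ≥0∞) + c * setNormRel A (J t x) :=
      iInf_le _ (J t x)
    have h2 : setNormRel A (J t x) ≤ (‖t⁻¹ • (x - J t x)‖₊ : ℝ≥0∞) := by
      simp only [setNormRel]
      exact iInf₂_le (t⁻¹ • (x - J t x)) (hJ t ht htω x)
    have h3 : c * (‖t⁻¹ • (x - J t x)‖₊ : ℝ≥0∞) = (‖x - J t x‖₊ : ℝ≥0∞) := by
      rw [← ofReal_norm_eq_coe_nnnorm, ← ofReal_norm_eq_coe_nnnorm, hc,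
        ← ENNReal.ofReal_mul ht.le]
      congr 1
      rw [norm_smul, norm_inv, Real.norm_eq_abs, abs_of_pos ht]
      field_simp
    calc Krel A x t ≤ (‖x - J t x‖₊ : ℝ≥0∞) + c * setNormRel A (J t x) := h1
      _ ≤ (‖x - J t x‖₊ : ℝ≥0∞) + c * (‖t⁻¹ • (x - J t x)‖₊ : ℝ≥0∞) := by
          gcongr
      _ = 2 * (‖x - J t x‖₊ : ℝ≥0∞) := by rw [h3]; ring
  -- key real inequality for upper bound
  have hkey : ∀ v f : X, (v, f) ∈ A →
      ‖x - J t x‖ ≤ (2 - t * ω) / (1 - t * ω) * (‖x - v‖ + t * ‖f‖) := by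
    intro v f hvf
    have hJv := hJ t ht htω v
    have hJx := hJ t ht htω x
    -- Lipschitz: (1-tω)‖Jv - Jx‖ ≤ ‖v - x‖
    have hlip : (1 - t * ω) * ‖J t v - J t x‖ ≤ ‖v - x‖ := by
      have := hacc _ hJv _ hJx t ht htω
      simp only at this
      have heq : J t v - J t x + t • (t⁻¹ • (v - J t v) - t⁻¹ • (x - J t x))
          = v - x := by
        rw [smul_sub, smul_smul, smul_smul, mul_inv_cancel₀ ht0, one_smul, one_smul]
        abel
      rwa [heq] at this
    -- ‖Jv - v‖ bound: (1-tω)‖Jv - v‖ ≤ t‖f‖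
    have hres : (1 - t * ω) * ‖J t v - v‖ ≤ t * ‖f‖ := by
      have := hacc _ hJv _ hvf t ht htω
      simp only at this
      have heq : J t v - v + t • (t⁻¹ • (v - J t v) - f) = -(t • f) := by
        rw [smul_sub, smul_smul, mul_inv_cancel₀ ht0, one_smul]
        abel
      rw [heq, norm_neg, norm_smul, Real.norm_eq_abs, abs_of_pos ht] at this
      exact this
    have htri : ‖x - J t x‖ ≤ ‖x - v‖ + ‖J t v - v‖ + ‖J t v - J t x‖ := by
      have : x - J t x = (x - v) - (J t v - v) + (J t v - J t x) := by abel
      rw [this]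
      calc ‖(x - v) - (J t v - v) + (J t v - J t x)‖
          ≤ ‖(x - v) - (J t v - v)‖ + ‖J t v - J t x‖ := norm_add_le _ _
        _ ≤ ‖x - v‖ + ‖J t v - v‖ + ‖J t v - J t x‖ := by
            have := norm_sub_le (x - v) (J t v - v); linarith
    have h4 : ‖J t v - v‖ ≤ t * ‖f‖ / (1 - t * ω) := by
      rw [le_div_iff₀ h1tω]; linarith [hres]
    have h5 : ‖J t v - J t x‖ ≤ ‖v - x‖ / (1 - t * ω) := by
      rw [le_div_iff₀ h1tω]; linarith [hlip]
    have h6 : ‖v - x‖ = ‖x - v‖ := norm_sub_rev _ _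
    have hfn : (0:ℝ) ≤ ‖f‖ := norm_nonneg f
    have hxv : (0:ℝ) ≤ ‖x - v‖ := norm_nonneg _
    rw [h6] at h5
    have : ‖x - J t x‖ ≤ ‖x - v‖ + t * ‖f‖ / (1 - t * ω) + ‖x - v‖ / (1 - t * ω) := by
      linarith
    calc ‖x - J t x‖ ≤ ‖x - v‖ + t * ‖f‖ / (1 - t * ω) + ‖x - v‖ / (1 - t * ω) := this
      _ ≤ (2 - t * ω) / (1 - t * ω) * (‖x - v‖ + t * ‖f‖) := by
          rw [div_mul_eq_mul_div, ← sub_nonneg]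
          have expand : (2 - t * ω) * (‖x - v‖ + t * ‖f‖) / (1 - t * ω)
              - (‖x - v‖ + t * ‖f‖ / (1 - t * ω) + ‖x - v‖ / (1 - t * ω))
              = ((1 - t * ω) * t * ‖f‖) / (1 - t * ω) := by
            field_simp; ring
          rw [expand]
          positivity
  -- upper bound in ENNReal: ‖x - J t x‖₊ ≤ C * Krel
  have hCpos : (0:ℝ) < (2 - t * ω) / (1 - t * ω) := by
    apply div_pos (by linarith) h1tω
  set C := ENNReal.ofReal ((2 - t * ω) / (1 - t * ω)) with hC
  have hC0 : C ≠ 0 := by simp [hC, ENNReal.ofReal_eq_zero]; linarith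
  have hCT : C ≠ ∞ := ENNReal.ofReal_ne_top
  have hkey2 : ∀ v f : X, (v, f) ∈ A →
      (‖x - J t x‖₊ : ℝ≥0∞) ≤ C * ((‖x - v‖₊ : ℝ≥0∞) + c * (‖f‖₊ : ℝ≥0∞)) := by
    intro v f hvf
    calc (‖x - J t x‖₊ : ℝ≥0∞) = ENNReal.ofReal ‖x - J t x‖ :=
          (ofReal_norm_eq_coe_nnnorm _).symm
      _ ≤ ENNReal.ofReal ((2 - t * ω) / (1 - t * ω) * (‖x - v‖ + t * ‖f‖)) :=
          ENNReal.ofReal_le_ofReal (hkey v f hvf)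
      _ = C * ((‖x - v‖₊ : ℝ≥0∞) + c * (‖f‖₊ : ℝ≥0∞)) := by
          rw [ENNReal.ofReal_mul hCpos.le, ENNReal.ofReal_add (norm_nonneg _)
            (by positivity), ENNReal.ofReal_mul ht.le, hC, hc,
            ofReal_norm_eq_coe_nnnorm, ofReal_norm_eq_coe_nnnorm]
  have hup' : (‖x - J t x‖₊ : ℝ≥0∞) / C ≤ Krel A x t := by
    rw [Krel]
    refine le_iInf fun v => ?_
    simp only [setNormRel]
    rw [ENNReal.mul_iInf_of_ne hc0 hcT]
    simp_rw [ENNReal.mul_iInf_of_ne hc0 hcT, ENNReal.add_iInf]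
    refine le_iInf fun f => le_iInf fun hvf => ?_
    rw [ENNReal.div_le_iff hC0 hCT, mul_comm]
    exact hkey2 v f hvf
  have hup : (‖x - J t x‖₊ : ℝ≥0∞) ≤ C * Krel A x t := by
    rw [mul_comm]; exact (ENNReal.div_le_iff hC0 hCT).mp hup'
  constructor
  · calc (1 / 2 : ℝ≥0∞) * (Krel A x t / c)
        ≤ (1 / 2 : ℝ≥0∞) * ((2 * (‖x - J t x‖₊ : ℝ≥0∞)) / c) := by gcongr
      _ = (‖x - J t x‖₊ : ℝ≥0∞) / c := by
          rw [← mul_div_assoc, ← mul_assoc, one_div,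
            ENNReal.inv_mul_cancel two_ne_zero ENNReal.ofNat_ne_top, one_mul]
  · calc (‖x - J t x‖₊ : ℝ≥0∞) / c ≤ (C * Krel A x t) / c := by gcongr
      _ = C * (Krel A x t / c) := by rw [mul_div_assoc]
end

section
/- Let A be m-accretive of type ω ≥ 0 on a Banach space X generating the semigroup S. Then for every x ∈ closure(dom A) and t, λ > 0 with λω < 1: ‖x − J_λ x‖ ≤ (λ/(t(1−λω)))‖x − S(t)x‖ + ((2−λω)/(t(1−λω)))·∫₀ᵗ ‖x − S(s)x‖ ds. In particular, taking λ = t with tω < 1, ‖x − J_t x‖ ≤ ((3 − tω + e^{ωt})/(1−tω)) · (1/t)∫₀ᵗ ‖x − S(s)x‖ ds. -/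
open Set Real MeasureTheory
open scoped ENNReal NNReal

/-- The domain of a relation `A ⊆ X × X`. -/
def relDom {X : Type*} (A : Set (X × X)) : Set X := {v | ∃ f, (v, f) ∈ A}

/-- The Kato bracket `[x,y] = inf_{λ>0} (‖x+λy‖ - ‖x‖)/λ`. -/
noncomputable def katoBracket {X : Type*} [NormedAddCommGroup X] [NormedSpace ℝ X]
    (x y : X) : ℝ :=
  sInf ((fun lam : ℝ => (‖x + lam • y‖ - ‖x‖) / lam) '' Set.Ioi 0)

section aux
variable {X : Type*} [NormedAddCommGroup X] [NormedSpace ℝ X]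

lemma kq_lb (z y : X) {mu : ℝ} (hmu : 0 < mu) : -‖y‖ ≤ (‖z + mu • y‖ - ‖z‖) / mu := by
  have h1 : ‖z‖ ≤ ‖z + mu • y‖ + mu * ‖y‖ := by
    calc ‖z‖ = ‖(z + mu • y) - mu • y‖ := by rw [add_sub_cancel_right]
    _ ≤ ‖z + mu • y‖ + ‖mu • y‖ := norm_sub_le _ _
    _ = ‖z + mu • y‖ + mu * ‖y‖ := by rw [norm_smul, Real.norm_of_nonneg hmu.le]
  rw [le_div_iff₀ hmu]
  nlinarith

lemma kq_bdd (z y : X) : BddBelow ((fun lam : ℝ => (‖z + lam • y‖ - ‖z‖) / lam) '' Set.Ioi 0) := by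
  refine ⟨-‖y‖, ?_⟩
  rintro a ⟨mu, hmu, rfl⟩
  exact kq_lb z y hmu

lemma kato_le (z y : X) {lam : ℝ} (h : 0 < lam) :
    katoBracket z y ≤ (‖z + lam • y‖ - ‖z‖) / lam :=
  csInf_le (kq_bdd z y) ⟨lam, h, rfl⟩

lemma neg_norm_le_kato (z y : X) : -‖y‖ ≤ katoBracket z y :=
  le_csInf ⟨_, ⟨1, by norm_num, rfl⟩⟩ (by rintro a ⟨mu, hmu, rfl⟩; exact kq_lb z y hmu)

lemma kato_le_norm (z y : X) : katoBracket z y ≤ ‖y‖ := by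
  have := kato_le z y one_pos
  simp only [one_smul, div_one] at this
  have := norm_add_le z y
  linarith

lemma kq_mono (z y : X) {mu lam : ℝ} (hmu : 0 < mu) (h : mu ≤ lam) :
    (‖z + mu • y‖ - ‖z‖) / mu ≤ (‖z + lam • y‖ - ‖z‖) / lam := by
  have hlam : 0 < lam := lt_of_lt_of_le hmu h
  have hmn : (mu / lam) * lam = mu := div_mul_cancel₀ _ hlam.ne'
  have hid : z + mu • y = (mu / lam) • (z + lam • y) + (1 - mu / lam) • z := by
    rw [smul_add, smul_smul, hmn, sub_smul, one_smul]; abel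
  have hr0 : 0 ≤ mu / lam := by positivity
  have hr1 : mu / lam ≤ 1 := (div_le_one hlam).2 h
  have key : ‖z + mu • y‖ ≤ (mu / lam) * ‖z + lam • y‖ + (1 - mu / lam) * ‖z‖ := by
    rw [hid]
    calc ‖(mu / lam) • (z + lam • y) + (1 - mu / lam) • z‖
        ≤ ‖(mu / lam) • (z + lam • y)‖ + ‖(1 - mu / lam) • z‖ := norm_add_le _ _
      _ = (mu / lam) * ‖z + lam • y‖ + (1 - mu / lam) * ‖z‖ := by
          rw [norm_smul, norm_smul, Real.norm_of_nonneg hr0, Real.norm_of_nonneg (by linarith)]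
  rw [div_le_div_iff₀ hmu hlam]
  nlinarith [norm_nonneg (z + lam • y), norm_nonneg z]

lemma kato_eq_iInf (z y : X) :
    katoBracket z y = ⨅ n : ℕ, (‖z + ((n : ℝ) + 1)⁻¹ • y‖ - ‖z‖) / ((n : ℝ) + 1)⁻¹ := by
  have hpos : ∀ n : ℕ, (0 : ℝ) < ((n : ℝ) + 1)⁻¹ := fun n => by positivity
  have hbdd : BddBelow (Set.range fun n : ℕ =>
      (‖z + ((n : ℝ) + 1)⁻¹ • y‖ - ‖z‖) / ((n : ℝ) + 1)⁻¹ ) := by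
    refine ⟨-‖y‖, ?_⟩
    rintro a ⟨n, rfl⟩
    exact kq_lb z y (hpos n)
  apply le_antisymm
  · exact le_ciInf fun n => kato_le z y (hpos n)
  · refine le_csInf ⟨_, ⟨1, by norm_num, rfl⟩⟩ ?_
    rintro a ⟨lam, hlam, rfl⟩
    simp only [Set.mem_Ioi] at hlam
    obtain ⟨n, hn⟩ := exists_nat_gt lam⁻¹
    have h1 : ((n : ℝ) + 1)⁻¹ ≤ lam := by
      rw [inv_le_comm₀ (by positivity) hlam]
      have : (0:ℝ) ≤ n := Nat.cast_nonneg n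
      linarith
    exact le_trans (ciInf_le hbdd n) (kq_mono z y (hpos n) h1)

lemma kato_tendsto (z y : X) :
    Filter.Tendsto (fun n : ℕ => (‖z + ((n : ℝ) + 1)⁻¹ • y‖ - ‖z‖) / ((n : ℝ) + 1)⁻¹)
      Filter.atTop (nhds (katoBracket z y)) := by
  rw [kato_eq_iInf]
  apply tendsto_atTop_ciInf
  · intro n m hnm
    apply kq_mono z y (by positivity)
    rw [inv_le_inv₀ (by positivity) (by positivity)]
    exact_mod_cast by omega
  · refine ⟨-‖y‖, ?_⟩
    rintro a ⟨n, rfl⟩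
    exact kq_lb z y (by positivity)

lemma kato_intervalIntegrable {u : ℝ → X} (hu : ContinuousOn u (Ici 0)) (y : X)
    {t : ℝ} (ht : 0 ≤ t) :
    IntervalIntegrable (fun r => katoBracket (u r) y) volume 0 t := by
  rw [intervalIntegrable_iff, uIoc_of_le ht]
  have hmono : volume.restrict (Ioc (0:ℝ) t) ≤ volume.restrict (Ici (0:ℝ)) :=
    Measure.restrict_mono (Set.Ioc_subset_Ioi_self.trans Set.Ioi_subset_Ici_self) le_rfl
  have hmeas : AEMeasurable (fun r => katoBracket (u r) y) (volume.restrict (Ioc 0 t)) := by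
    apply aemeasurable_of_tendsto_metrizable_ae'
      (f := fun (n : ℕ) r => (‖u r + ((n:ℝ)+1)⁻¹ • y‖ - ‖u r‖) / ((n:ℝ)+1)⁻¹)
    · intro n
      refine AEMeasurable.mono_measure ?_ hmono
      refine ContinuousOn.aemeasurable ?_ measurableSet_Ici
      exact ((hu.add continuousOn_const).norm.sub hu.norm).div_const _
    · exact Filter.Eventually.of_forall fun r => kato_tendsto (u r) y
  refine Integrable.mono' (g := fun _ => ‖y‖) ?_ hmeas.aestronglyMeasurable ?_
  · exact integrableOn_const measure_Ioc_lt_top.ne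
  · refine Filter.Eventually.of_forall fun r => ?_
    rw [Real.norm_eq_abs, abs_le]
    exact ⟨neg_norm_le_kato _ _, kato_le_norm _ _⟩

end aux

/-- Let `A` be m-accretive of type `ω ≥ 0` generating the semigroup `S`
(whose orbits are integral solutions of `u̇ + Au ∋ 0`).  Then for every
`x ∈ closure(dom A)` and `t, λ > 0` with `λω < 1`:
`‖x - J_λ x‖ ≤ (λ/(t(1-λω)))‖x - S(t)x‖ + ((2-λω)/(t(1-λω)))·∫₀ᵗ ‖x - S(s)x‖ ds`;
in particular, taking `λ = t` with `tω < 1`,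
`‖x - J_t x‖ ≤ ((3 - tω + e^{ωt})/(1-tω))·(1/t)∫₀ᵗ ‖x - S(s)x‖ ds`. -/
theorem stmt9 {X : Type*} [NormedAddCommGroup X] [NormedSpace ℝ X]
    (A : Set (X × X)) (ω : ℝ) (hω : 0 ≤ ω) (hacc : AccretiveOfType A ω)
    (J : ℝ → X → X)
    (hJ : ∀ lam : ℝ, 0 < lam → lam * ω < 1 → ∀ x : X,
      (J lam x, lam⁻¹ • (x - J lam x)) ∈ A)
    (S : ℝ → X → X)
    (hS0 : ∀ x ∈ closure (relDom A), S 0 x = x)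
    (hSmap : ∀ t ≥ (0 : ℝ), MapsTo (S t) (closure (relDom A)) (closure (relDom A)))
    (hSsemi : ∀ x ∈ closure (relDom A), ∀ s t : ℝ, 0 ≤ s → 0 ≤ t →
      S (s + t) x = S s (S t x))
    (hScont : ∀ x ∈ closure (relDom A), ContinuousOn (fun s => S s x) (Set.Ici 0))
    (hSlip : ∀ t ≥ (0 : ℝ), ∀ x ∈ closure (relDom A), ∀ y ∈ closure (relDom A),
      ‖S t x - S t y‖ ≤ exp (ω * t) * ‖x - y‖)
    -- mild solutions are integral solutions
    (hint : ∀ x ∈ closure (relDom A), ∀ v f : X, (v, f) ∈ A → ∀ s t : ℝ, 0 ≤ s → s ≤ t →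
      ‖S t x - v‖ ≤ ‖S s x - v‖ + (∫ r in s..t, katoBracket (S r x - v) (-f))
        + ω * ∫ r in s..t, ‖S r x - v‖)
    (x : X) (hx : x ∈ closure (relDom A)) :
    (∀ t lam : ℝ, 0 < t → 0 < lam → lam * ω < 1 →
      ‖x - J lam x‖ ≤ (lam / (t * (1 - lam * ω))) * ‖x - S t x‖
        + ((2 - lam * ω) / (t * (1 - lam * ω))) * ∫ s in (0 : ℝ)..t, ‖x - S s x‖) ∧
    (∀ t : ℝ, 0 < t → t * ω < 1 →
      ‖x - J t x‖ ≤ ((3 - t * ω + exp (ω * t)) / (1 - t * ω))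
        * ((1 / t) * ∫ s in (0 : ℝ)..t, ‖x - S s x‖)) := by
  have hcont : ContinuousOn (fun s => S s x) (Ici 0) := hScont x hx
  have part1 : ∀ t lam : ℝ, 0 < t → 0 < lam → lam * ω < 1 →
      ‖x - J lam x‖ ≤ (lam / (t * (1 - lam * ω))) * ‖x - S t x‖
        + ((2 - lam * ω) / (t * (1 - lam * ω))) * ∫ s in (0 : ℝ)..t, ‖x - S s x‖ := by
    intro t lam ht hlam hlo
    set v := J lam x with hv
    have hvA : (v, lam⁻¹ • (x - v)) ∈ A := hJ lam hlam hlo x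
    set fA := lam⁻¹ • (x - v) with hfA
    have hsub : Icc (0:ℝ) t ⊆ Ici 0 := Icc_subset_Ici_self
    have huIcc : uIcc (0:ℝ) t = Icc 0 t := uIcc_of_le ht.le
    have hcont1 : ContinuousOn (fun r => ‖x - S r x‖) (Icc 0 t) :=
      ((continuousOn_const.sub hcont).norm).mono hsub
    have hcont2 : ContinuousOn (fun r => ‖S r x - v‖) (Icc 0 t) :=
      ((hcont.sub continuousOn_const).norm).mono hsub
    have hI1 : IntervalIntegrable (fun r => ‖x - S r x‖) volume 0 t := by
      apply ContinuousOn.intervalIntegrable; rwa [huIcc]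
    have hI2 : IntervalIntegrable (fun r => ‖S r x - v‖) volume 0 t := by
      apply ContinuousOn.intervalIntegrable; rwa [huIcc]
    have hIB : IntervalIntegrable (fun r => katoBracket (S r x - v) (-fA)) volume 0 t :=
      kato_intervalIntegrable (hcont.sub continuousOn_const) (-fA) ht.le
    set I := ∫ s in (0:ℝ)..t, ‖x - S s x‖ with hI
    set K := ∫ r in (0:ℝ)..t, ‖S r x - v‖ with hK
    set B := ∫ r in (0:ℝ)..t, katoBracket (S r x - v) (-fA) with hB
    have hInn : 0 ≤ I := intervalIntegral.integral_nonneg ht.le (fun u _ => norm_nonneg _)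
    -- step 1: integral solution inequality
    have h1 : ‖S t x - v‖ ≤ ‖x - v‖ + B + ω * K := by
      have := hint x hx v fA hvA 0 t le_rfl ht.le
      rwa [hS0 x hx] at this
    -- step 2: bracket bound
    have h2 : lam * B ≤ I - K := by
      have hpt : ∀ r ∈ Icc (0:ℝ) t,
          katoBracket (S r x - v) (-fA) ≤ (‖x - S r x‖ - ‖S r x - v‖) / lam := by
        intro r _
        have hz : (S r x - v) + lam • (-fA) = S r x - x := by
          rw [hfA, smul_neg, smul_smul, mul_inv_cancel₀ hlam.ne']
          rw [one_smul]; abel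
        have := kato_le (S r x - v) (-fA) hlam
        rw [hz, norm_sub_rev (S r x) x] at this
        exact this
      have hIq : IntervalIntegrable (fun r => (‖x - S r x‖ - ‖S r x - v‖) / lam) volume 0 t :=
        (hI1.sub hI2).div_const lam
      have hmono := intervalIntegral.integral_mono_on ht.le hIB hIq hpt
      have heq : (∫ r in (0:ℝ)..t, (‖x - S r x‖ - ‖S r x - v‖) / lam) = (I - K) / lam := by
        rw [intervalIntegral.integral_div, intervalIntegral.integral_sub hI1 hI2]
      rw [heq] at hmono
      calc lam * B ≤ lam * ((I - K) / lam) := by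
            exact mul_le_mul_of_nonneg_left hmono hlam.le
        _ = I - K := by field_simp
    -- step 3: K lower bound
    have h3 : t * ‖x - v‖ - I ≤ K := by
      have hpt : ∀ r ∈ Icc (0:ℝ) t, ‖x - v‖ - ‖x - S r x‖ ≤ ‖S r x - v‖ := by
        intro r _
        have : ‖x - v‖ ≤ ‖x - S r x‖ + ‖S r x - v‖ := by
          calc ‖x - v‖ = ‖(x - S r x) + (S r x - v)‖ := by rw [sub_add_sub_cancel]
          _ ≤ _ := norm_add_le _ _
        linarith
      have hIq : IntervalIntegrable (fun r => ‖x - v‖ - ‖x - S r x‖) volume 0 t :=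
        (intervalIntegrable_const).sub hI1
      have hmono := intervalIntegral.integral_mono_on ht.le hIq hI2 hpt
      have heq : (∫ r in (0:ℝ)..t, (‖x - v‖ - ‖x - S r x‖)) = t * ‖x - v‖ - I := by
        rw [intervalIntegral.integral_sub intervalIntegrable_const hI1,
          intervalIntegral.integral_const, sub_zero, smul_eq_mul]
      rwa [heq] at hmono
    -- step 4: triangle
    have h4 : ‖x - v‖ ≤ ‖x - S t x‖ + ‖S t x - v‖ := by
      calc ‖x - v‖ = ‖(x - S t x) + (S t x - v)‖ := by rw [sub_add_sub_cancel]
      _ ≤ _ := norm_add_le _ _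
    have hD : 0 < t * (1 - lam * ω) := by nlinarith
    rw [div_mul_eq_mul_div, div_mul_eq_mul_div, ← add_div, le_div_iff₀ hD]
    nlinarith [mul_le_mul_of_nonneg_left h1 hlam.le,
      mul_le_mul_of_nonneg_left h3 (by linarith : (0:ℝ) ≤ 1 - lam * ω),
      mul_le_mul_of_nonneg_left h4 hlam.le, mul_nonneg hω hInn]
  refine ⟨part1, ?_⟩
  intro t ht hto
  set I := ∫ s in (0:ℝ)..t, ‖x - S s x‖ with hI
  have hInn : 0 ≤ I := intervalIntegral.integral_nonneg ht.le (fun u _ => norm_nonneg _)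
  have hsub : Icc (0:ℝ) t ⊆ Ici 0 := Icc_subset_Ici_self
  have huIcc : uIcc (0:ℝ) t = Icc 0 t := uIcc_of_le ht.le
  have hI1 : IntervalIntegrable (fun r => ‖x - S r x‖) volume 0 t := by
    apply ContinuousOn.intervalIntegrable
    rw [huIcc]
    exact ((continuousOn_const.sub hcont).norm).mono hsub
  have hI3 : IntervalIntegrable (fun s => ‖x - S (t - s) x‖) volume 0 t := by
    apply ContinuousOn.intervalIntegrable
    rw [huIcc]
    apply ContinuousOn.norm
    apply continuousOn_const.sub
    apply hcont.comp (continuous_const.sub continuous_id).continuousOn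
    intro s hs
    simp only [mem_Ici]
    have := hs.2
    simp only [Pi.sub_apply, id_eq]
    linarith
  -- pointwise bound
  have hpt : ∀ s ∈ Icc (0:ℝ) t,
      ‖x - S t x‖ ≤ ‖x - S s x‖ + exp (ω * t) * ‖x - S (t - s) x‖ := by
    intro s hs
    have hts : (0:ℝ) ≤ t - s := by linarith [hs.2]
    have hsemi : S t x = S s (S (t - s) x) := by
      have := hSsemi x hx s (t - s) hs.1 hts
      rwa [add_sub_cancel] at this
    have hmem : S (t - s) x ∈ closure (relDom A) := hSmap (t - s) hts hx
    have hlip := hSlip s hs.1 x hx (S (t - s) x) hmem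
    have hexp : exp (ω * s) ≤ exp (ω * t) :=
      Real.exp_le_exp.2 (mul_le_mul_of_nonneg_left hs.2 hω)
    have htri : ‖x - S t x‖ ≤ ‖x - S s x‖ + ‖S s x - S t x‖ := by
      calc ‖x - S t x‖ = ‖(x - S s x) + (S s x - S t x)‖ := by rw [sub_add_sub_cancel]
      _ ≤ _ := norm_add_le _ _
    rw [hsemi] at htri ⊢
    have hnn : (0:ℝ) ≤ ‖x - S (t - s) x‖ := norm_nonneg _
    nlinarith
  have hmono := intervalIntegral.integral_mono_on ht.le intervalIntegrable_const
    (hI1.add (hI3.const_mul _)) hpt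
  have hcs : (∫ s in (0:ℝ)..t, ‖x - S (t - s) x‖) = I := by
    have := intervalIntegral.integral_comp_sub_left (a := (0:ℝ)) (b := t)
      (fun r => ‖x - S r x‖) t
    simpa using this
  have hbd : t * ‖x - S t x‖ ≤ I + exp (ω * t) * I := by
    rw [intervalIntegral.integral_const, sub_zero, smul_eq_mul] at hmono
    rw [intervalIntegral.integral_add hI1 (hI3.const_mul _),
      intervalIntegral.integral_const_mul, hcs] at hmono
    exact hmono
  have hp := part1 t t ht ht hto
  have hD : (0:ℝ) < 1 - t * ω := by linarith
  have e1 : t / (t * (1 - t * ω)) = 1 / (1 - t * ω) := by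
    field_simp
  have e2 : ((2 - t * ω) / (t * (1 - t * ω))) * I = ((2 - t * ω) / (1 - t * ω)) * ((1/t) * I) := by
    rw [mul_comm t (1 - t * ω), ← div_div]
    ring
  rw [e1, e2] at hp
  have hbd' : ‖x - S t x‖ ≤ (1 + exp (ω * t)) * ((1/t) * I) := by
    rw [show (1 + exp (ω * t)) * ((1/t) * I) = (I + exp (ω * t) * I) / t by
      field_simp [ht.ne']]
    rw [le_div_iff₀ ht]
    linarith
  calc ‖x - J t x‖ ≤ (1 / (1 - t * ω)) * ‖x - S t x‖
        + ((2 - t * ω) / (1 - t * ω)) * ((1/t) * I) := hp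
    _ ≤ (1 / (1 - t * ω)) * ((1 + exp (ω * t)) * ((1/t) * I))
        + ((2 - t * ω) / (1 - t * ω)) * ((1/t) * I) := by
        have h0 : (0:ℝ) ≤ 1 / (1 - t * ω) := by positivity
        exact add_le_add_left (mul_le_mul_of_nonneg_left hbd' h0) _
    _ = ((3 - t * ω + exp (ω * t)) / (1 - t * ω)) * ((1/t) * I) := by ring
end

section
/- Let A be m-accretive of type ω ≥ 0, B a second operator dominated by A (i.e. |Bv| ≤ a|Av| + b(‖v‖) for some a ∈ (0,1) and increasing b : ℝ₊ → ℝ₊), such that A+B is m-accretive of type ω' ≥ 0. Let K^{A+B} denote the K-function of the couple (‖·‖, |(A+B)·|). Then for every τ > 0 with τ·max{ω,ω'} < 1 and every x ∈ X, t ∈ (0,τ): K^{A+B}(x,t)/t ≤ (a+2)·‖x − J_t^A x‖/t + b(‖x‖/(1−τω) + C), where J_t^A is the resolvent of A and C ≥ 0 is a constant independent of x (depending only on a fixed x₀ ∈ X, τω, and sup_{t∈(0,τ)}‖J_t^A x₀‖). -/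
open Set Real
open scoped ENNReal NNReal

/-- The sum relation `A + B`. -/
def sumRel {X : Type*} [Add X] (A B : Set (X × X)) : Set (X × X) :=
  {p | ∃ f g, (p.1, f) ∈ A ∧ (p.1, g) ∈ B ∧ p.2 = f + g}

/-- pointwise perturbation estimate: let `A` be m-accretive of type `ω ≥ 0`
with resolvent `J^A`, `B` dominated by `A` (`|Bv| ≤ a|Av| + b(‖v‖)` with `a ∈ (0,1)` and
`b` increasing, nonnegative), and `A+B` m-accretive of type `ω' ≥ 0`.  Then for every
`τ > 0` with `τ·max{ω,ω'} < 1` there is a constant `C ≥ 0`, independent of `x`, such that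
for every `x ∈ X` and `t ∈ (0,τ)`:
`K^{A+B}(x,t)/t ≤ (a+2)·‖x - J_t^A x‖/t + b(‖x‖/(1-τω) + C)`. -/
theorem stmt13 {X : Type*} [NormedAddCommGroup X] [NormedSpace ℝ X]
    (A B : Set (X × X)) (ω ω' : ℝ) (hω : 0 ≤ ω) (hω' : 0 ≤ ω')
    (haccA : AccretiveOfType A ω) (haccAB : AccretiveOfType (sumRel A B) ω')
    (J : ℝ → X → X)
    (hJ : ∀ lam : ℝ, 0 < lam → lam * ω < 1 → ∀ x : X,
      (J lam x, lam⁻¹ • (x - J lam x)) ∈ A)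
    -- m-accretivity (range condition) for A + B
    (hsurjAB : ∀ lam : ℝ, 0 < lam → lam * ω' < 1 → ∀ y : X,
      ∃ p ∈ sumRel A B, p.1 + lam • p.2 = y)
    (a : ℝ) (ha0 : 0 < a) (ha1 : a < 1) (b : ℝ → ℝ) (hb_mono : Monotone b)
    (hb_nonneg : ∀ r, 0 ≤ b r)
    (hdom : ∀ v : X, setNormRel B v
      ≤ ENNReal.ofReal a * setNormRel A v + ENNReal.ofReal (b ‖v‖))
    (τ : ℝ) (hτ : 0 < τ) (hτω : τ * max ω ω' < 1) :
    ∃ C : ℝ, 0 ≤ C ∧ ∀ x : X, ∀ t : ℝ, 0 < t → t < τ →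
      Krel (sumRel A B) x t / ENNReal.ofReal t
        ≤ ENNReal.ofReal (a + 2) * ((‖x - J t x‖₊ : ℝ≥0∞) / ENNReal.ofReal t)
          + ENNReal.ofReal (b (‖x‖ / (1 - τ * ω) + C)) := by

  have hτω1 : τ * ω < 1 :=
    lt_of_le_of_lt (mul_le_mul_of_nonneg_left (le_max_left ω ω') hτ.le) hτω
  have hτω'1 : τ * ω' < 1 :=
    lt_of_le_of_lt (mul_le_mul_of_nonneg_left (le_max_right ω ω') hτ.le) hτω
  have hδ : 0 < 1 - τ * ω := by linarith
  obtain ⟨p, hp, -⟩ := hsurjAB τ hτ hτω'1 0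
  obtain ⟨f₀, g₀, hf₀, -, -⟩ := hp
  set x₀ := p.1 with hx₀def
  refine ⟨‖x₀‖ + (τ * ‖f₀‖ + ‖x₀‖) / (1 - τ * ω), by positivity, ?_⟩
  intro x t ht htτ
  have htτω : t * ω ≤ τ * ω := mul_le_mul_of_nonneg_right htτ.le hω
  have htω : t * ω < 1 := lt_of_le_of_lt htτω hτω1
  have hδt : 0 < 1 - t * ω := by linarith
  have hsmul : ∀ u : X, t • (t⁻¹ • u) = u := fun u => by
    rw [smul_smul, mul_inv_cancel₀ ht.ne', one_smul]
  -- resolvent memberships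
  have hA1 : (J t x, t⁻¹ • (x - J t x)) ∈ A := hJ t ht htω x
  have hA2 : (J t x₀, t⁻¹ • (x₀ - J t x₀)) ∈ A := hJ t ht htω x₀
  -- Lipschitz estimate for the resolvent
  have h1 := haccA _ hA1 _ hA2 t ht htω
  simp only at h1
  rw [smul_sub, hsmul, hsmul] at h1
  have e1 : J t x - J t x₀ + (x - J t x - (x₀ - J t x₀)) = x - x₀ := by abel
  rw [e1] at h1
  -- estimate for ‖J t x₀ - x₀‖
  have h2 := haccA _ hA2 _ hf₀ t ht htω
  simp only at h2
  rw [smul_sub, hsmul] at h2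
  have e2 : J t x₀ - x₀ + (x₀ - J t x₀ - t • f₀) = -(t • f₀) := by abel
  rw [e2, norm_neg, norm_smul, Real.norm_eq_abs, abs_of_pos ht] at h2
  -- bound on ‖J t x‖
  have htri : ‖J t x‖ ≤ ‖J t x - J t x₀‖ + ‖J t x₀ - x₀‖ + ‖x₀‖ := by
    have : J t x = (J t x - J t x₀) + (J t x₀ - x₀) + x₀ := by abel
    calc ‖J t x‖ = ‖(J t x - J t x₀) + (J t x₀ - x₀) + x₀‖ := by rw [← this]
      _ ≤ ‖(J t x - J t x₀) + (J t x₀ - x₀)‖ + ‖x₀‖ := norm_add_le _ _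
      _ ≤ ‖J t x - J t x₀‖ + ‖J t x₀ - x₀‖ + ‖x₀‖ := by
          exact add_le_add_left (norm_add_le _ _) _
  have hxx₀ : ‖x - x₀‖ ≤ ‖x‖ + ‖x₀‖ := norm_sub_le _ _
  have htf₀ : t * ‖f₀‖ ≤ τ * ‖f₀‖ := mul_le_mul_of_nonneg_right htτ.le (norm_nonneg _)
  have hJb : ‖J t x‖ ≤ ‖x‖ / (1 - τ * ω)
      + (‖x₀‖ + (τ * ‖f₀‖ + ‖x₀‖) / (1 - τ * ω)) := by
    have h3 : (‖J t x‖ - ‖x₀‖) * (1 - τ * ω) ≤ ‖x‖ + ‖x₀‖ + τ * ‖f₀‖ := by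
      nlinarith [norm_nonneg (J t x - J t x₀), norm_nonneg (J t x₀ - x₀),
        mul_le_mul_of_nonneg_right (show (1:ℝ) - τ * ω ≤ 1 - t * ω by linarith)
          (norm_nonneg (J t x - J t x₀)),
        mul_le_mul_of_nonneg_right (show (1:ℝ) - τ * ω ≤ 1 - t * ω by linarith)
          (norm_nonneg (J t x₀ - x₀))]
    have h4 : ‖J t x‖ ≤ ‖x₀‖ + (‖x‖ + ‖x₀‖ + τ * ‖f₀‖) / (1 - τ * ω) := by
      rw [← sub_le_iff_le_add', le_div_iff₀ hδ]
      exact h3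
    calc ‖J t x‖ ≤ ‖x₀‖ + (‖x‖ + ‖x₀‖ + τ * ‖f₀‖) / (1 - τ * ω) := h4
      _ = ‖x‖ / (1 - τ * ω) + (‖x₀‖ + (τ * ‖f₀‖ + ‖x₀‖) / (1 - τ * ω)) := by ring
  have hbb : b ‖J t x‖ ≤ b (‖x‖ / (1 - τ * ω) + (‖x₀‖ + (τ * ‖f₀‖ + ‖x₀‖) / (1 - τ * ω))) :=
    hb_mono hJb
  set C := ‖x₀‖ + (τ * ‖f₀‖ + ‖x₀‖) / (1 - τ * ω) with hCdef
  set v := J t x with hvdef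
  set fx := t⁻¹ • (x - v) with hfxdef
  set r := ‖x - v‖ with hrdef
  have hr0 : 0 ≤ r := norm_nonneg _
  have hfxn : ‖fx‖ = r / t := by
    rw [hfxdef, norm_smul, norm_inv, Real.norm_eq_abs, abs_of_pos ht, hrdef]
    ring
  set bb := b (‖x‖ / (1 - τ * ω) + C) with hbbdef
  have hbb0 : 0 ≤ bb := hb_nonneg _
  -- |A v| ≤ ‖fx‖
  have lemA : setNormRel A v ≤ (‖fx‖₊ : ℝ≥0∞) := iInf₂_le fx hA1
  have hrE : ENNReal.ofReal r = (‖x - v‖₊ : ℝ≥0∞) := by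
    rw [hrdef, ofReal_norm, enorm_eq_nnnorm]
  -- |(A+B) v| ≤ ‖fx‖ + |B v|
  have lemSum : setNormRel (sumRel A B) v ≤ (‖fx‖₊ : ℝ≥0∞) + setNormRel B v := by
    have step : ∀ g : X, (v, g) ∈ B →
        setNormRel (sumRel A B) v ≤ (‖fx‖₊ : ℝ≥0∞) + (‖g‖₊ : ℝ≥0∞) := by
      intro g hg
      have hmem : ((v, fx + g) : X × X) ∈ sumRel A B := ⟨fx, g, hA1, hg, rfl⟩
      calc setNormRel (sumRel A B) v ≤ (‖fx + g‖₊ : ℝ≥0∞) := iInf₂_le (fx + g) hmem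
        _ ≤ (‖fx‖₊ : ℝ≥0∞) + (‖g‖₊ : ℝ≥0∞) := by exact_mod_cast nnnorm_add_le _ _
    calc setNormRel (sumRel A B) v
        ≤ ⨅ (g : X) (_ : (v, g) ∈ B), ((‖fx‖₊ : ℝ≥0∞) + (‖g‖₊ : ℝ≥0∞)) :=
          le_iInf₂ step
      _ = (‖fx‖₊ : ℝ≥0∞) + setNormRel B v := by
          simp only [setNormRel, ENNReal.add_iInf]
  have lemSum2 : setNormRel (sumRel A B) v
      ≤ ENNReal.ofReal ((1 + a) * ‖fx‖ + b ‖v‖) := by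
    calc setNormRel (sumRel A B) v ≤ (‖fx‖₊ : ℝ≥0∞) + setNormRel B v := lemSum
      _ ≤ (‖fx‖₊ : ℝ≥0∞) + (ENNReal.ofReal a * setNormRel A v + ENNReal.ofReal (b ‖v‖)) :=
          add_le_add_right (hdom v) _
      _ ≤ (‖fx‖₊ : ℝ≥0∞) + (ENNReal.ofReal a * (‖fx‖₊ : ℝ≥0∞)
            + ENNReal.ofReal (b ‖v‖)) :=
          add_le_add_right (add_le_add_left (mul_le_mul_right lemA _) _) _
      _ = ENNReal.ofReal ((1 + a) * ‖fx‖ + b ‖v‖) := by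
          rw [← enorm_eq_nnnorm, ← ofReal_norm, ← ENNReal.ofReal_mul ha0.le,
            ← ENNReal.ofReal_add (mul_nonneg ha0.le (norm_nonneg _)) (hb_nonneg _),
            ← ENNReal.ofReal_add (norm_nonneg _)
              (add_nonneg (mul_nonneg ha0.le (norm_nonneg _)) (hb_nonneg _))]
          congr 1
          ring
  -- main bound on Krel
  have hKrel : Krel (sumRel A B) x t ≤ ENNReal.ofReal ((a + 2) * r + bb * t) := by
    have step1 : Krel (sumRel A B) x t
        ≤ (‖x - v‖₊ : ℝ≥0∞) + ENNReal.ofReal t * setNormRel (sumRel A B) v :=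
      iInf_le _ v
    have step2 : (‖x - v‖₊ : ℝ≥0∞) + ENNReal.ofReal t * setNormRel (sumRel A B) v
        ≤ ENNReal.ofReal r + ENNReal.ofReal (t * ((1 + a) * ‖fx‖ + b ‖v‖)) := by
      rw [hrE, ENNReal.ofReal_mul ht.le]
      exact add_le_add_right (mul_le_mul_right lemSum2 _) _
    have heq : r + t * ((1 + a) * ‖fx‖ + b ‖v‖) = (a + 2) * r + b ‖v‖ * t := by
      rw [hfxn]
      field_simp
      ring
    calc Krel (sumRel A B) x t
        ≤ ENNReal.ofReal r + ENNReal.ofReal (t * ((1 + a) * ‖fx‖ + b ‖v‖)) :=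
          step1.trans step2
      _ = ENNReal.ofReal ((a + 2) * r + b ‖v‖ * t) := by
          rw [← ENNReal.ofReal_add hr0
            (mul_nonneg ht.le (add_nonneg
              (mul_nonneg (by linarith) (norm_nonneg _)) (hb_nonneg _))), heq]
      _ ≤ ENNReal.ofReal ((a + 2) * r + bb * t) := by
          apply ENNReal.ofReal_le_ofReal
          have : b ‖v‖ * t ≤ bb * t := mul_le_mul_of_nonneg_right hbb ht.le
          linarith
  -- conclude
  have ht0 : ENNReal.ofReal t ≠ 0 := by
    simp [ENNReal.ofReal_eq_zero]; linarith
  have htT : ENNReal.ofReal t ≠ ⊤ := ENNReal.ofReal_ne_top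
  rw [ENNReal.div_le_iff ht0 htT]
  calc Krel (sumRel A B) x t ≤ ENNReal.ofReal ((a + 2) * r + bb * t) := hKrel
    _ = ENNReal.ofReal ((a + 2) * r) + ENNReal.ofReal (bb * t) := by
        rw [ENNReal.ofReal_add (mul_nonneg (by linarith) hr0) (mul_nonneg hbb0 ht.le)]
    _ = ENNReal.ofReal (a + 2) * ENNReal.ofReal r + ENNReal.ofReal bb * ENNReal.ofReal t := by
        rw [ENNReal.ofReal_mul (by linarith), ENNReal.ofReal_mul hbb0]
    _ = (ENNReal.ofReal (a + 2) * ((‖x - v‖₊ : ℝ≥0∞) / ENNReal.ofReal t)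
          + ENNReal.ofReal bb) * ENNReal.ofReal t := by
        rw [add_mul, mul_assoc, ENNReal.div_mul_cancel ht0 htT, hrE]
end
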